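/- The map HQ(A,σ,Eˣ) → H²(A,Eˣ)^σ × Hom(A^σ, Eˣ) sending [(a,b)] to the pair ([a], b|_{A^σ}) is a group isomorphism. (This is the isomorphism of split short exact sequences 0 → H²(A,Eˣ)^σ → HQ(A,σ,Eˣ) → Hom(A^σ,Eˣ) → 0 of Proposition 3.7 of the paper, describing isomorphism classes of quasicharacter sheaves on étale commutative group schemes in the stalk/cocycle model.) -/

import Mathlib

/-! Basic setup: cocycle description of quasicharacter sheaves on étale
commutative group schemes, following the paper's stalk description. -/

section QCS

variable (A : Type) [AddCommGroup A] (M : Type) [CommGroup M]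

/-- The 2-cocycle condition for a function `a : A × A → M` (trivial action). -/
def IsCocycle (a : A → A → M) : Prop :=
  ∀ x y z : A, a (x + y) z * a x y = a x (y + z) * a y z

/-- The coboundary of a function `d : A → M`. -/
def cobound (d : A → M) : A → A → M :=
  fun x y => d (x + y) * (d x)⁻¹ * (d y)⁻¹

/-- The group of 2-cocycles `Z²(A,M)`. -/
def Z2 : Subgroup (A → A → M) where
  carrier := {a | IsCocycle A M a}
  one_mem' := by intro x y z; simp
  mul_mem' := by
    intro a b ha hb
    intro x y z
    simp only [Pi.mul_apply]
    rw [mul_mul_mul_comm, ha x y z, hb x y z, mul_mul_mul_comm]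
  inv_mem' := by
    intro a ha
    intro x y z
    simp only [Pi.inv_apply]
    rw [← mul_inv, ← mul_inv, ha x y z]

lemma mem_Z2_iff {a : A → A → M} : a ∈ Z2 A M ↔ IsCocycle A M a := Iff.rfl

/-- The coboundary map, as a homomorphism. -/
def coboundHom : (A → M) →* (A → A → M) where
  toFun := cobound A M
  map_one' := by funext x y; simp [cobound]
  map_mul' := by
    intro d e
    funext x y
    simp only [cobound, Pi.mul_apply, mul_inv]
    simp [mul_comm, mul_left_comm, mul_assoc]

/-- The group of 2-coboundaries `B²(A,M)`. -/
def B2 : Subgroup (A → A → M) := (coboundHom A M).range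

/-- The second cohomology group `H²(A,M)` (trivial action). -/
abbrev H2 : Type := Z2 A M ⧸ (B2 A M).subgroupOf (Z2 A M)

variable (σ : A ≃+ A)

/-- The compatibility condition between a 2-cocycle `a` and a 1-cochain `b`
relative to the automorphism `σ`. -/
def IsCompat (a : A → A → M) (b : A → M) : Prop :=
  ∀ x y : A, a (σ x) (σ y) * (a x y)⁻¹ = b (x + y) * (b x)⁻¹ * (b y)⁻¹

/-- The group `ZQ(A,σ,M)` of quasicharacter data. -/
def ZQ : Subgroup ((A → A → M) × (A → M)) where
  carrier := {p | IsCocycle A M p.1 ∧ IsCompat A M σ p.1 p.2}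
  one_mem' := ⟨fun x y z => by simp, fun x y => by simp⟩
  mul_mem' := by
    rintro p q ⟨hp1, hp2⟩ ⟨hq1, hq2⟩
    refine ⟨mul_mem (show p.1 ∈ Z2 A M from hp1) (show q.1 ∈ Z2 A M from hq1), ?_⟩
    intro x y
    have key : (p.1 (σ x) (σ y) * (p.1 x y)⁻¹) * (q.1 (σ x) (σ y) * (q.1 x y)⁻¹)
        = (p.2 (x + y) * (p.2 x)⁻¹ * (p.2 y)⁻¹) * (q.2 (x + y) * (q.2 x)⁻¹ * (q.2 y)⁻¹) := by
      rw [hp2 x y, hq2 x y]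
    simpa [Prod.fst_mul, Prod.snd_mul, Pi.mul_apply, mul_inv, mul_comm, mul_left_comm,
      mul_assoc] using key
  inv_mem' := by
    rintro p ⟨hp1, hp2⟩
    refine ⟨inv_mem (show p.1 ∈ Z2 A M from hp1), ?_⟩
    intro x y
    have key := congrArg (·⁻¹) (hp2 x y)
    simpa [Prod.fst_inv, Prod.snd_inv, Pi.inv_apply, mul_inv, mul_comm, mul_left_comm,
      mul_assoc] using key

lemma mem_ZQ_iff {p : (A → A → M) × (A → M)} :
    p ∈ ZQ A M σ ↔ IsCocycle A M p.1 ∧ IsCompat A M σ p.1 p.2 := Iff.rfl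

/-- The map `d ↦ (x ↦ d(σ x)·d(x)⁻¹)`, as a homomorphism. -/
def sigmaDiff : (A → M) →* (A → M) where
  toFun d := fun x => d (σ x) * (d x)⁻¹
  map_one' := by funext x; simp
  map_mul' := by
    intro d e
    funext x
    simp only [Pi.mul_apply, mul_inv]
    simp [mul_comm, mul_left_comm, mul_assoc]

/-- The subgroup `BQ(A,σ,M)` of coboundary quasicharacter data. -/
def BQ : Subgroup ((A → A → M) × (A → M)) :=
  ((coboundHom A M).prod (sigmaDiff A M σ)).range

/-- `HQ(A,σ,M)`: the group of quasicharacter data modulo coboundaries. -/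
abbrev HQ : Type := ZQ A M σ ⧸ (BQ A M σ).subgroupOf (ZQ A M σ)

/-- The subgroup `A^σ` of fixed points of `σ`. -/
def fixedAdd : AddSubgroup A where
  carrier := {x | σ x = x}
  zero_mem' := by simp
  add_mem' := by
    intro a b ha hb
    simp only [Set.mem_setOf_eq] at *
    rw [map_add, ha, hb]
  neg_mem' := by
    intro a ha
    simp only [Set.mem_setOf_eq] at *
    rw [map_neg, ha]

/-- The restriction of the 1-cochain part of a quasicharacter datum to `A^σ`,
as a character of `A^σ`. -/
def trZ (p : ZQ A M σ) : AddChar (fixedAdd A σ) M where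
  toFun := fun x => (p : (A → A → M) × (A → M)).2 (x : A)
  map_zero_eq_one' := by
    have h := p.prop.2 (0 : A) 0
    simp at h
    simpa using h
  map_add_eq_mul' := by
    rintro ⟨x, hx⟩ ⟨y, hy⟩
    have hx' : σ x = x := hx
    have hy' : σ y = y := hy
    have h := p.prop.2 x y
    rw [hx', hy', mul_inv_cancel] at h
    have h2 : (p : (A → A → M) × (A → M)).2 (x + y)
        * ((p : (A → A → M) × (A → M)).2 x)⁻¹
        * ((p : (A → A → M) × (A → M)).2 y)⁻¹ = 1 := h.symm
    rw [mul_inv_eq_one] at h2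
    rw [mul_inv_eq_iff_eq_mul] at h2
    simpa [mul_comm] using h2

/-- The trace map `ZQ(A,σ,M) → Hom(A^σ, M)`, `(a,b) ↦ b|_{A^σ}`. -/
def trZHom : ZQ A M σ →* AddChar (fixedAdd A σ) M where
  toFun := trZ A M σ
  map_one' := by
    apply AddChar.ext
    intro x
    rfl
  map_mul' := by
    intro p q
    apply AddChar.ext
    intro x
    rfl

lemma trZHom_trivial_on_BQ :
    (BQ A M σ).subgroupOf (ZQ A M σ) ≤ (trZHom A M σ).ker := by
  rintro ⟨p, hpZ⟩ hpB
  obtain ⟨d, hd⟩ := hpB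
  have hd' : ((coboundHom A M).prod (sigmaDiff A M σ)) d = p := hd
  have hd2 : p.2 = fun x => d (σ x) * (d x)⁻¹ := by rw [← hd']; rfl
  apply AddChar.ext
  rintro ⟨x, hx⟩
  have hx' : σ x = x := hx
  show trZ A M σ ⟨p, hpZ⟩ _ = 1
  simp [trZ, hd2, hx']

/-- The trace-of-Frobenius homomorphism `Tr : HQ(A,σ,M) → Hom(A^σ,M)`. -/
def TrHom : HQ A M σ →* AddChar (fixedAdd A σ) M :=
  QuotientGroup.lift _ (trZHom A M σ) (trZHom_trivial_on_BQ A M σ)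

/-- The projection `ZQ(A,σ,M) → Z²(A,M)`, `(a,b) ↦ a`. -/
def zproj : ZQ A M σ →* Z2 A M where
  toFun := fun p => ⟨(p : (A → A → M) × (A → M)).1, p.prop.1⟩
  map_one' := rfl
  map_mul' := fun _ _ => rfl

lemma zproj_trivial_on_BQ :
    (BQ A M σ).subgroupOf (ZQ A M σ) ≤
      ((QuotientGroup.mk' ((B2 A M).subgroupOf (Z2 A M))).comp (zproj A M σ)).ker := by
  rintro ⟨p, hpZ⟩ hpB
  obtain ⟨d, hd⟩ := hpB
  have hd' : ((coboundHom A M).prod (sigmaDiff A M σ)) d = p := hd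
  have hd1 : p.1 = cobound A M d := by rw [← hd']; rfl
  simp only [MonoidHom.mem_ker, MonoidHom.comp_apply]
  rw [QuotientGroup.mk'_apply, QuotientGroup.eq_one_iff]
  show (zproj A M σ ⟨p, hpZ⟩ : A → A → M) ∈ B2 A M
  exact ⟨d, hd1.symm⟩

/-- The map `HQ(A,σ,M) → H²(A,M)` sending `[(a,b)]` to `[a]`. -/
def clsHom : HQ A M σ →* H2 A M :=
  QuotientGroup.lift _ ((QuotientGroup.mk' ((B2 A M).subgroupOf (Z2 A M))).comp (zproj A M σ))
    (zproj_trivial_on_BQ A M σ)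

/-- Precomposition with `σ × σ` on 2-cocycles. -/
def precompZ2 : Z2 A M →* Z2 A M where
  toFun := fun a => ⟨fun x y => (a : A → A → M) (σ x) (σ y), by
    intro x y z
    have := a.prop (σ x) (σ y) (σ z)
    simpa [map_add] using this⟩
  map_one' := rfl
  map_mul' := fun _ _ => rfl

lemma precompZ2_trivial : ((B2 A M).subgroupOf (Z2 A M)) ≤
    (((QuotientGroup.mk' ((B2 A M).subgroupOf (Z2 A M))).comp (precompZ2 A M σ))).ker := by
  rintro ⟨a, haZ⟩ haB
  obtain ⟨d, hd⟩ := haB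
  simp only [MonoidHom.mem_ker, MonoidHom.comp_apply]
  rw [QuotientGroup.mk'_apply, QuotientGroup.eq_one_iff]
  show (precompZ2 A M σ ⟨a, haZ⟩ : A → A → M) ∈ B2 A M
  refine ⟨fun x => d (σ x), ?_⟩
  have hd1 : a = cobound A M d := hd.symm
  funext x y
  show cobound A M (fun x => d (σ x)) x y = a (σ x) (σ y)
  rw [hd1]
  simp [cobound, map_add]

/-- The action of `σ` on `H²(A,M)`, `[a] ↦ [a ∘ (σ × σ)]`. -/
def H2act : H2 A M →* H2 A M :=
  QuotientGroup.lift _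
    ((QuotientGroup.mk' ((B2 A M).subgroupOf (Z2 A M))).comp (precompZ2 A M σ))
    (precompZ2_trivial A M σ)

/-- The subgroup `H²(A,M)^σ` of `σ`-fixed classes. -/
def H2fixed : Subgroup (H2 A M) where
  carrier := {c | H2act A M σ c = c}
  one_mem' := map_one _
  mul_mem' := by
    intro a b ha hb
    simp only [Set.mem_setOf_eq] at *
    rw [map_mul, ha, hb]
  inv_mem' := by
    intro a ha
    simp only [Set.mem_setOf_eq] at *
    rw [map_inv, ha]

end QCS

section Helpers

/-- Divisibility of `Additive M` from rootability of `M`. -/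
def divisibleAdditive (M : Type) [CommGroup M] [RootableBy M ℤ] :
    DivisibleBy (Additive M) ℤ where
  div a n := Additive.ofMul (RootableBy.root a.toMul n)
  div_zero a := by
    show Additive.ofMul (RootableBy.root a.toMul 0) = 0
    rw [RootableBy.root_zero]
    rfl
  div_cancel a hn := by
    show _ • Additive.ofMul (RootableBy.root a.toMul _) = a
    rw [← ofMul_zpow, RootableBy.root_cancel _ hn]
    rfl

/-- Extension of homomorphisms into a divisible group along injections. -/
lemma extend_along {A B M : Type} [AddCommGroup A] [AddCommGroup B] [CommGroup M]
    [DivisibleBy (Additive M) ℤ] (ι : A →+ B) (hι : Function.Injective ι)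
    (g : A →+ Additive M) : ∃ h : B →+ Additive M, ∀ a, h (ι a) = g a := by
  haveI : Module.Injective ℤ (Additive M) := (Module.Baer.of_divisible _).injective
  obtain ⟨h, hh⟩ := Module.Injective.out ι.toIntLinearMap hι g.toIntLinearMap
  exact ⟨h.toAddMonoidHom, hh⟩

variable (A : Type) [AddCommGroup A] (M : Type) [CommGroup M] (σ : A ≃+ A)

lemma zq_b_zero (p : ZQ A M σ) : (p : (A → A → M) × (A → M)).2 0 = 1 := by
  exact (trZ A M σ p).map_zero_eq_one

/-- `e` as needed in injectivity: kill a character vanishing on the fixed points. -/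
lemma exists_sigma_diff [DivisibleBy (Additive M) ℤ] (b' : A →+ Additive M)
    (hb' : ∀ x : A, σ x = x → b' x = 0) :
    ∃ e : A →+ Additive M, ∀ x : A, e (σ x) - e x = b' x := by
  set f : A →+ A := σ.toAddMonoidHom - AddMonoidHom.id A with hf
  have hfx : ∀ x, f x = σ x - x := fun x => rfl
  have hker : ∀ x ∈ f.ker, b' x = 0 := by
    intro x hx
    have : σ x - x = 0 := hx
    exact hb' x (by rwa [sub_eq_zero] at this)
  set g₀ : A ⧸ f.ker →+ Additive M := QuotientAddGroup.lift f.ker b' hker with hg₀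
  set ι : (A ⧸ f.ker) →+ A := f.range.subtype.comp (QuotientAddGroup.rangeKerLift f) with hι
  have hinj : Function.Injective ι := by
    intro x y hxy
    exact QuotientAddGroup.rangeKerLift_injective f (Subtype.ext hxy)
  obtain ⟨e, he⟩ := extend_along ι hinj g₀
  refine ⟨e, fun x => ?_⟩
  have h1 : ι (QuotientAddGroup.mk x) = f x := by
    show ((QuotientAddGroup.rangeKerLift f) (QuotientAddGroup.mk x) : A) = f x
    exact AddMonoidHom.coe_rangeRestrict f x
  have h2 : e (f x) = b' x := by
    rw [← h1, he]
    rfl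
  rw [← h2, hfx, map_sub]

end Helpers

/-- The map `HQ(A,σ,Eˣ) → H²(A,Eˣ)^σ × Hom(A^σ, Eˣ)` sending `[(a,b)]`
to `([a], b|_{A^σ})` is a group isomorphism. -/
theorem HQ_iso_fixedH2_prod_characters
    (E : Type) [Field E] [IsAlgClosed E] [CharZero E]
    (A : Type) [AddCommGroup A] (σ : A ≃+ A) :
    ∃ e : HQ A Eˣ σ ≃* (H2fixed A Eˣ σ) × AddChar (fixedAdd A σ) Eˣ,
      ∀ c : HQ A Eˣ σ,
        ((e c).1 : H2 A Eˣ) = clsHom A Eˣ σ c ∧ (e c).2 = TrHom A Eˣ σ c := by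
  classical
  haveI hRn : RootableBy Eˣ ℕ := rootableByOfPowLeftSurj _ _ (by
    intro n hn u
    obtain ⟨z, hz⟩ := IsAlgClosed.exists_pow_nat_eq (u : E) (Nat.pos_of_ne_zero hn)
    have hz0 : z ≠ 0 := by
      rintro rfl
      rw [zero_pow hn] at hz
      exact u.ne_zero hz.symm
    refine ⟨Units.mk0 z hz0, Units.ext ?_⟩
    simpa using hz)
  haveI hRz : RootableBy Eˣ ℤ := Group.rootableByIntOfRootableByNat Eˣ
  haveI hDiv : DivisibleBy (Additive Eˣ) ℤ := divisibleAdditive Eˣ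
  set M := Eˣ with hM
  -- `clsHom` lands in the fixed subgroup
  have hfix : ∀ c : HQ A M σ, clsHom A M σ c ∈ H2fixed A M σ := by
    intro c
    refine QuotientGroup.induction_on c fun p => ?_
    show H2act A M σ (clsHom A M σ (QuotientGroup.mk p)) = _
    have h1 : clsHom A M σ (QuotientGroup.mk p)
        = QuotientGroup.mk (zproj A M σ p) := rfl
    have h2 : H2act A M σ (QuotientGroup.mk (zproj A M σ p) : H2 A M)
        = QuotientGroup.mk (precompZ2 A M σ (zproj A M σ p)) := rfl
    rw [h1, h2]
    rw [QuotientGroup.eq]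
    refine Subgroup.mem_subgroupOf.mpr ⟨fun z => ((p : (A → A → M) × (A → M)).2 z)⁻¹, ?_⟩
    funext x y
    have hc := p.prop.2 x y
    have hc2 := congrArg (fun t : M => t⁻¹) hc
    simp only [mul_inv, inv_inv] at hc2
    show ((p : (A → A → M) × (A → M)).2 (x + y))⁻¹
        * (((p : (A → A → M) × (A → M)).2 x)⁻¹)⁻¹
        * (((p : (A → A → M) × (A → M)).2 y)⁻¹)⁻¹
      = ((p : (A → A → M) × (A → M)).1 (σ x) (σ y))⁻¹
        * (p : (A → A → M) × (A → M)).1 x y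
    exact hc2.symm
  let φ : HQ A M σ →* (H2fixed A M σ) × AddChar (fixedAdd A σ) M :=
    MonoidHom.prod ((clsHom A M σ).codRestrict (H2fixed A M σ) hfix) (TrHom A M σ)
  have hsurj : Function.Surjective φ := by
    rintro ⟨⟨c, hc⟩, χ⟩
    obtain ⟨a, rfl⟩ := QuotientGroup.mk_surjective c
    have hc' : (QuotientGroup.mk (precompZ2 A M σ a) : H2 A M) = QuotientGroup.mk a := hc
    have hmem := QuotientGroup.eq.mp hc'.symm
    rw [Subgroup.mem_subgroupOf] at hmem
    obtain ⟨b, hb⟩ := hmem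
    have hcompat : IsCompat A M σ (a : A → A → M) b := by
      intro x y
      have h1 : cobound A M b x y
          = ((a : A → A → M) x y)⁻¹ * (a : A → A → M) (σ x) (σ y) :=
        congrFun (congrFun hb x) y
      show _ = b (x + y) * (b x)⁻¹ * (b y)⁻¹
      rw [show b (x + y) * (b x)⁻¹ * (b y)⁻¹ = cobound A M b x y from rfl, h1, mul_comm]
    set p : ZQ A M σ := ⟨((a : A → A → M), b), ⟨a.prop, hcompat⟩⟩ with hp
    have hψadd : ∀ x y : fixedAdd A σ,
        χ (x + y) * (trZ A M σ p (x + y))⁻¹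
          = (χ x * (trZ A M σ p x)⁻¹) * (χ y * (trZ A M σ p y)⁻¹) := by
      intro x y
      rw [AddChar.map_add_eq_mul, AddChar.map_add_eq_mul]
      simp [mul_inv, mul_comm, mul_left_comm, mul_assoc]
    let ψ : (fixedAdd A σ) →+ Additive M :=
      { toFun := fun x => Additive.ofMul (χ x * (trZ A M σ p x)⁻¹)
        map_zero' := by
          show Additive.ofMul (χ 0 * (trZ A M σ p 0)⁻¹) = 0
          rw [AddChar.map_zero_eq_one, AddChar.map_zero_eq_one]; simp
        map_add' := fun x y => by
          show Additive.ofMul (χ (x + y) * (trZ A M σ p (x + y))⁻¹)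
            = Additive.ofMul (χ x * (trZ A M σ p x)⁻¹)
              + Additive.ofMul (χ y * (trZ A M σ p y)⁻¹)
          rw [← ofMul_mul]; exact congrArg Additive.ofMul (hψadd x y) }
    obtain ⟨h, hh⟩ := extend_along (fixedAdd A σ).subtype Subtype.val_injective ψ
    have hq : ((a : A → A → M), fun x => b x * (h x).toMul) ∈ ZQ A M σ := by
      refine ⟨a.prop, ?_⟩
      intro x y
      show (a : A → A → M) (σ x) (σ y) * ((a : A → A → M) x y)⁻¹
        = (b (x + y) * (h (x + y)).toMul) * (b x * (h x).toMul)⁻¹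
          * (b y * (h y).toMul)⁻¹
      rw [hcompat x y]
      rw [show h (x + y) = h x + h y from map_add h x y, toMul_add]
      simp [mul_inv, mul_comm, mul_left_comm, mul_assoc]
    refine ⟨QuotientGroup.mk (⟨_, hq⟩ : ZQ A M σ), ?_⟩
    refine Prod.ext (Subtype.ext ?_) ?_
    · show (QuotientGroup.mk (zproj A M σ ⟨_, hq⟩) : H2 A M) = QuotientGroup.mk a
      exact congrArg QuotientGroup.mk (Subtype.ext rfl)
    · apply AddChar.ext
      intro x
      show b (x : A) * (h (x : A)).toMul = χ x
      rw [show (h ((x : A))).toMul = χ x * (b (x : A))⁻¹ from congrArg Additive.toMul (hh x)]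
      simp [mul_comm, mul_left_comm, mul_assoc]
      exact mul_inv_cancel_left (G := Eˣ) _ _
  have hinj : Function.Injective φ := by
    refine (injective_iff_map_eq_one φ).mpr fun c => ?_
    refine QuotientGroup.induction_on c fun p hcone => ?_
    have h1 : clsHom A M σ (QuotientGroup.mk p) = 1 := by
      have := congrArg Prod.fst hcone
      exact congrArg Subtype.val this
    have h2 : TrHom A M σ (QuotientGroup.mk p) = 1 := congrArg Prod.snd hcone
    have hB : (zproj A M σ p : A → A → M) ∈ B2 A M :=
      Subgroup.mem_subgroupOf.mp ((QuotientGroup.eq_one_iff (zproj A M σ p)).mp h1)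
    obtain ⟨d, hd⟩ := hB
    have hdc : ∀ x y, cobound A M d x y = (p : (A → A → M) × (A → M)).1 x y :=
      fun x y => congrFun (congrFun hd x) y
    have hbtriv : ∀ (x : A) (hx : σ x = x), (p : (A → A → M) × (A → M)).2 x = 1 := by
      intro x hx
      have h3 : (trZ A M σ p) ⟨x, hx⟩ = (1 : AddChar (fixedAdd A σ) M) ⟨x, hx⟩ := by
        rw [show trZ A M σ p = (1 : AddChar (fixedAdd A σ) M) from h2]
      exact h3
    have key : ∀ x y : A,
        (p : (A → A → M) × (A → M)).2 (x + y) * (d (σ (x + y)))⁻¹ * d (x + y)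
          = ((p : (A → A → M) × (A → M)).2 x * (d (σ x))⁻¹ * d x)
            * ((p : (A → A → M) × (A → M)).2 y * (d (σ y))⁻¹ * d y) := by
      intro x y
      have h := p.prop.2 x y
      rw [← hdc (σ x) (σ y), ← hdc x y] at h
      rw [eq_comm, mul_inv_eq_iff_eq_mul, mul_inv_eq_iff_eq_mul] at h
      rw [h]
      apply Additive.ofMul.injective
      simp only [cobound, map_add, ofMul_mul, ofMul_inv]
      abel
    let b' : A →+ Additive M :=
      { toFun := fun x =>
          Additive.ofMul ((p : (A → A → M) × (A → M)).2 x * (d (σ x))⁻¹ * d x)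
        map_zero' := by
          show Additive.ofMul ((p : (A → A → M) × (A → M)).2 0 * (d (σ 0))⁻¹ * d 0) = 0
          rw [show σ (0 : A) = 0 from map_zero σ, zq_b_zero A M σ p]
          simp
          exact neg_add_cancel (G := Additive Eˣ) _
        map_add' := fun x y => by
          show Additive.ofMul
              ((p : (A → A → M) × (A → M)).2 (x + y) * (d (σ (x + y)))⁻¹ * d (x + y))
            = Additive.ofMul ((p : (A → A → M) × (A → M)).2 x * (d (σ x))⁻¹ * d x)
              + Additive.ofMul ((p : (A → A → M) × (A → M)).2 y * (d (σ y))⁻¹ * d y)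
          rw [← ofMul_mul]; exact congrArg Additive.ofMul (key x y) }
    have hvanish : ∀ x : A, σ x = x → b' x = 0 := by
      intro x hx
      show Additive.ofMul ((p : (A → A → M) × (A → M)).2 x * (d (σ x))⁻¹ * d x) = 0
      rw [hbtriv x hx, hx]
      simp
      exact neg_add_cancel (G := Additive Eˣ) _
    obtain ⟨e, he⟩ := exists_sigma_diff A M σ b' hvanish
    refine (QuotientGroup.eq_one_iff p).mpr (Subgroup.mem_subgroupOf.mpr
      ⟨fun x => d x * (e x).toMul, Prod.ext ?_ ?_⟩)
    · funext x y
      show cobound A M (fun x => d x * (e x).toMul) x y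
          = (p : (A → A → M) × (A → M)).1 x y
      rw [← hdc x y]
      show d (x + y) * (e (x + y)).toMul * (d x * (e x).toMul)⁻¹
          * (d y * (e y).toMul)⁻¹ = cobound A M d x y
      rw [show e (x + y) = e x + e y from map_add e x y, toMul_add]
      simp [cobound, mul_inv, mul_comm, mul_left_comm, mul_assoc]
    · funext x
      show d (σ x) * (e (σ x)).toMul * (d x * (e x).toMul)⁻¹
          = (p : (A → A → M) × (A → M)).2 x
      have h6 : (e (σ x)).toMul / (e x).toMul
          = (p : (A → A → M) × (A → M)).2 x * (d (σ x))⁻¹ * d x := by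
        rw [← toMul_sub, he x]
        rfl
      rw [div_eq_mul_inv] at h6
      have hsplit : d (σ x) * (e (σ x)).toMul * (d x * (e x).toMul)⁻¹
          = (d (σ x) * (d x)⁻¹) * ((e (σ x)).toMul * ((e x).toMul)⁻¹) := by
        simp [mul_inv, mul_comm, mul_left_comm, mul_assoc]
      rw [hsplit, h6]
      simp [mul_comm, mul_left_comm, mul_assoc]
      rw [mul_inv_cancel (G := Eˣ) (d (σ x)), mul_one (M := Eˣ), mul_inv_cancel_left (G := Eˣ)]
  refine ⟨MulEquiv.ofBijective φ ⟨hinj, hsurj⟩, fun c => ⟨rfl, rfl⟩⟩
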